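/- Fix a seed set S ⊆ V and a finite candidate edge set E_C ⊆ (S × V) ∖ E with probabilities p_e ∈ [0,1]. Then the augmented influence spread is submodular in the added edge set: for all A ⊆ B ⊆ E_C and every e ∈ E_C ∖ B, σ(A ∪ {e}, S) − σ(A, S) ≥ σ(B ∪ {e}, S) − σ(B, S). -/

import Mathlib

open scoped Classical

noncomputable section

/-- The set of nodes reachable from some node of `S` via edges of `g`
(every node reaches itself). -/
def Reach {V : Type*} (S : Finset V) (g : Finset (V × V)) : Set V :=
  {x | ∃ s ∈ S, Relation.ReflTransGen (fun a b => (a, b) ∈ g) s x}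

/-- Probability of the live-edge graph `g ⊆ F`. -/
def liveProb {V : Type*} [DecidableEq V] (F : Finset (V × V)) (p : V × V → ℝ)
    (g : Finset (V × V)) : ℝ :=
  (∏ e ∈ g, p e) * ∏ e ∈ F \ g, (1 - p e)

/-- The expected spread of the seed set `S` over live-edge graphs of edge set `F`;
the augmented influence spread is `σ(A, S) = expSpread (E ∪ A) p S`. -/
def expSpread {V : Type*} [DecidableEq V] (F : Finset (V × V)) (p : V × V → ℝ)
    (S : Finset V) : ℝ :=
  ∑ g ∈ F.powerset, liveProb F p g * ((Reach S g).ncard : ℝ)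

section Aux

set_option linter.unusedSectionVars false

variable {V : Type*} [DecidableEq V]

lemma reach_mono {S : Finset V} {g g' : Finset (V × V)} (h : g ⊆ g') :
    Reach S g ⊆ Reach S g' := by
  rintro x ⟨s, hs, hp⟩
  exact ⟨s, hs, Relation.ReflTransGen.mono (fun a b hab => h hab) _ _ hp⟩

lemma liveProb_nonneg (F : Finset (V × V)) {p : V × V → ℝ}
    (hp : ∀ e, 0 ≤ p e ∧ p e ≤ 1) (g : Finset (V × V)) : 0 ≤ liveProb F p g :=
  mul_nonneg (Finset.prod_nonneg fun e _ => (hp e).1)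
    (Finset.prod_nonneg fun e _ => by linarith [(hp e).2])

lemma sum_liveProb (F : Finset (V × V)) (p : V × V → ℝ) :
    ∑ g ∈ F.powerset, liveProb F p g = 1 := by
  have h := Finset.prod_add p (fun e => 1 - p e) F
  simp only [add_sub_cancel, Finset.prod_const_one] at h
  exact h.symm

lemma sum_liveProb_insert (F : Finset (V × V)) (p : V × V → ℝ) {e : V × V} (he : e ∉ F)
    (φ : Finset (V × V) → ℝ) :
    ∑ g ∈ (insert e F).powerset, liveProb (insert e F) p g * φ g
      = ∑ g ∈ F.powerset,
          liveProb F p g * (p e * φ (insert e g) + (1 - p e) * φ g) := by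
  have hdisj : Disjoint F.powerset (F.powerset.image (insert e)) := by
    rw [Finset.disjoint_left]
    intro g hg hg'
    rcases Finset.mem_image.1 hg' with ⟨t, _, ht⟩
    have : e ∈ g := ht ▸ Finset.mem_insert_self e t
    exact he (Finset.mem_powerset.1 hg this)
  rw [Finset.powerset_insert, Finset.sum_union hdisj, Finset.sum_image (by
    intro g hg g' hg' hgg'
    have h1 : e ∉ g := fun h => he (Finset.mem_powerset.1 hg h)
    have h2 : e ∉ g' := fun h => he (Finset.mem_powerset.1 hg' h)
    rw [← Finset.erase_insert h1, ← Finset.erase_insert h2, hgg'])]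
  have key1 : ∀ g ∈ F.powerset, liveProb (insert e F) p g = (1 - p e) * liveProb F p g := by
    intro g hg
    have hgF := Finset.mem_powerset.1 hg
    have heg : e ∉ g := fun h => he (hgF h)
    have hsd : (insert e F) \ g = insert e (F \ g) := by
      rw [Finset.insert_sdiff_of_notMem _ heg]
    rw [liveProb, hsd, Finset.prod_insert (by simp [he]), liveProb]; ring
  have key2 : ∀ g ∈ F.powerset,
      liveProb (insert e F) p (insert e g) = p e * liveProb F p g := by
    intro g hg
    have hgF := Finset.mem_powerset.1 hg
    have heg : e ∉ g := fun h => he (hgF h)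
    have hsd : (insert e F) \ (insert e g) = F \ g := by
      ext x
      simp only [Finset.mem_sdiff, Finset.mem_insert]
      constructor
      · rintro ⟨hx1, hx2⟩
        rcases hx1 with h | h
        · exact absurd (Or.inl h) hx2
        · exact ⟨h, fun hxg => hx2 (Or.inr hxg)⟩
      · rintro ⟨hx1, hx2⟩
        exact ⟨Or.inr hx1, fun h => by
          rcases h with h | h
          · exact he (h ▸ hx1)
          · exact hx2 h⟩
    rw [liveProb, hsd, Finset.prod_insert heg, liveProb]; ring
  have hA : ∑ g ∈ F.powerset, liveProb (insert e F) p g * φ g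
      = ∑ g ∈ F.powerset, (1 - p e) * (liveProb F p g * φ g) :=
    Finset.sum_congr rfl fun g hg => by rw [key1 g hg]; ring
  have hB : ∑ g ∈ F.powerset, liveProb (insert e F) p (insert e g) * φ (insert e g)
      = ∑ g ∈ F.powerset, p e * (liveProb F p g * φ (insert e g)) :=
    Finset.sum_congr rfl fun g hg => by rw [key2 g hg]; ring
  rw [hA, hB, ← Finset.sum_add_distrib]
  exact Finset.sum_congr rfl fun g _ => by ring

lemma sum_liveProb_union (p : V × V → ℝ) (D : Finset (V × V)) :
    ∀ (F : Finset (V × V)) (φ : Finset (V × V) → ℝ), Disjoint F D →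
    ∑ g ∈ (F ∪ D).powerset, liveProb (F ∪ D) p g * φ g
      = ∑ g ∈ F.powerset, liveProb F p g *
          ∑ h ∈ D.powerset, liveProb D p h * φ (g ∪ h) := by
  induction D using Finset.induction_on with
  | empty =>
    intro F φ _
    simp [liveProb]
  | @insert a D' ha ih =>
    intro F φ hdisj
    have haF : a ∉ F := fun h => (Finset.disjoint_left.1 hdisj h) (Finset.mem_insert_self a D')
    have hFD : Disjoint F D' :=
      hdisj.mono_right (Finset.subset_insert a D')
    have haFD : a ∉ F ∪ D' := by simp [haF, ha]
    rw [Finset.union_insert, sum_liveProb_insert (F ∪ D') p haFD φ,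
      ih F (fun g => p a * φ (insert a g) + (1 - p a) * φ g) hFD]
    refine Finset.sum_congr rfl fun g _ => ?_
    congr 1
    rw [sum_liveProb_insert D' p ha (fun h => φ (g ∪ h))]
    exact Finset.sum_congr rfl fun h _ => by rw [Finset.union_insert]

lemma expSpread_insert (F : Finset (V × V)) (p : V × V → ℝ) (S : Finset V)
    {e : V × V} (he : e ∉ F) :
    expSpread (insert e F) p S - expSpread F p S
      = p e * ∑ g ∈ F.powerset, liveProb F p g *
          (((Reach S (insert e g)).ncard : ℝ) - ((Reach S g).ncard : ℝ)) := by
  rw [expSpread, expSpread,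
    sum_liveProb_insert F p he (fun g => ((Reach S g).ncard : ℝ)),
    ← Finset.sum_sub_distrib, Finset.mul_sum]
  exact Finset.sum_congr rfl fun g _ => by ring

lemma reach_insert_eq (S : Finset V) (g : Finset (V × V)) (e : V × V) (hs : e.1 ∈ S) :
    Reach S (insert e g) = Reach S g ∪ Reach {e.2} g := by
  ext x
  constructor
  · rintro ⟨s, hsS, hpath⟩
    induction hpath with
    | refl => exact Or.inl ⟨s, hsS, .refl⟩
    | @tail b c hyp hedge ih =>
      rcases Finset.mem_insert.1 hedge with h | h
      · right
        exact ⟨e.2, Finset.mem_singleton_self _, by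
          have : c = e.2 := congrArg Prod.snd h
          rw [this]⟩
      · rcases ih with ⟨t, ht, hpt⟩ | ⟨t, ht, hpt⟩
        · exact Or.inl ⟨t, ht, hpt.tail h⟩
        · exact Or.inr ⟨t, ht, hpt.tail h⟩
  · rintro (⟨s, hsS, hpath⟩ | ⟨t, ht, hpath⟩)
    · exact ⟨s, hsS, Relation.ReflTransGen.mono (fun a b hab => Finset.mem_insert_of_mem hab) _ _ hpath⟩
    · refine ⟨e.1, hs, .head ?_ (Relation.ReflTransGen.mono (fun a b hab => Finset.mem_insert_of_mem hab) _ _ hpath)⟩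
      · rw [Finset.mem_singleton.1 ht]
        exact Finset.mem_insert_self e g

lemma reach_diff_subset (S : Finset V) (v : V) (g h : Finset (V × V))
    (hh : ∀ a ∈ h, a.1 ∈ S) :
    Reach {v} (g ∪ h) \ Reach S (g ∪ h) ⊆ Reach {v} g \ Reach S g := by
  rintro x ⟨⟨w, hw, hpath⟩, hnx⟩
  rw [Finset.mem_singleton] at hw
  subst hw
  have key : ∀ y, Relation.ReflTransGen (fun a b => (a, b) ∈ g ∪ h) w y →
      y ∉ Reach S (g ∪ h) → y ∈ Reach {w} g := by
    intro y hy
    induction hy with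
    | refl => exact fun _ => ⟨w, Finset.mem_singleton_self w, .refl⟩
    | @tail b c hyp hedge ih =>
      intro hny
      rcases Finset.mem_union.1 hedge with hg' | hh'
      · have hb : b ∉ Reach S (g ∪ h) := fun hc =>
          hny (by rcases hc with ⟨t, ht, hp⟩; exact ⟨t, ht, hp.tail hedge⟩)
        rcases ih hb with ⟨t, ht, hp⟩
        exact ⟨t, ht, hp.tail hg'⟩
      · exact absurd ⟨b, hh _ hh', Relation.ReflTransGen.single hedge⟩ hny
  refine ⟨key x hpath hnx, fun hc => hnx (reach_mono Finset.subset_union_left hc)⟩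

lemma gain_eq [Fintype V] (S : Finset V) (f : Finset (V × V)) (e : V × V) (hs : e.1 ∈ S) :
    ((Reach S (insert e f)).ncard : ℝ) - ((Reach S f).ncard : ℝ)
      = ((Reach {e.2} f \ Reach S f).ncard : ℝ) := by
  rw [reach_insert_eq S f e hs, ← Set.union_diff_self,
    Set.ncard_union_eq Set.disjoint_sdiff_right (Set.toFinite _) (Set.toFinite _)]
  push_cast
  ring

end Aux

/-- Submodularity of the augmented influence spread in the added edge set: for
`A ⊆ B ⊆ E_C` with `E_C ⊆ (S × V) ∖ E` and `e ∈ E_C ∖ B`,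
`σ(A ∪ {e}, S) − σ(A, S) ≥ σ(B ∪ {e}, S) − σ(B, S)`. -/
theorem augmented_spread_submodular {V : Type*} [Fintype V] [DecidableEq V]
    (E : Finset (V × V)) (p : V × V → ℝ)
    (hp : ∀ e, 0 ≤ p e ∧ p e ≤ 1)
    (S : Finset V) (EC : Finset (V × V))
    (hEC : ∀ e ∈ EC, e.1 ∈ S ∧ e ∉ E) :
    ∀ A B : Finset (V × V), A ⊆ B → B ⊆ EC → ∀ e ∈ EC, e ∉ B →
      expSpread (E ∪ (B ∪ {e})) p S - expSpread (E ∪ B) p S ≤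
        expSpread (E ∪ (A ∪ {e})) p S - expSpread (E ∪ A) p S := by
  intro A B hAB hBEC e heEC heB
  have heS : e.1 ∈ S := (hEC e heEC).1
  have heE : e ∉ E := (hEC e heEC).2
  have heA : e ∉ A := fun h => heB (hAB h)
  have heEB : e ∉ E ∪ B := by simp [heE, heB]
  have heEA : e ∉ E ∪ A := by simp [heE, heA]
  have hrw1 : E ∪ (B ∪ {e}) = insert e (E ∪ B) := by
    rw [← Finset.union_assoc, Finset.union_comm (E ∪ B) {e}, ← Finset.insert_eq]
  have hrw2 : E ∪ (A ∪ {e}) = insert e (E ∪ A) := by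
    rw [← Finset.union_assoc, Finset.union_comm (E ∪ A) {e}, ← Finset.insert_eq]
  rw [hrw1, hrw2, expSpread_insert (E ∪ B) p S heEB, expSpread_insert (E ∪ A) p S heEA]
  apply mul_le_mul_of_nonneg_left _ (hp e).1
  -- decompose E ∪ B as (E ∪ A) ∪ (B \ A)
  set φ : Finset (V × V) → ℝ :=
    fun g => ((Reach S (insert e g)).ncard : ℝ) - ((Reach S g).ncard : ℝ) with hφ
  have hUn : E ∪ B = (E ∪ A) ∪ (B \ A) := by
    rw [Finset.union_assoc, Finset.union_sdiff_of_subset hAB]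
  have hdisj : Disjoint (E ∪ A) (B \ A) := by
    rw [Finset.disjoint_left]
    intro x hx hxD
    rcases Finset.mem_sdiff.1 hxD with ⟨hxB, hxA⟩
    rcases Finset.mem_union.1 hx with h | h
    · exact (hEC x (hBEC hxB)).2 h
    · exact hxA h
  rw [hUn, sum_liveProb_union p (B \ A) (E ∪ A) φ hdisj]
  apply Finset.sum_le_sum
  intro g hg
  apply mul_le_mul_of_nonneg_left _ (liveProb_nonneg _ hp g)
  calc ∑ h ∈ (B \ A).powerset, liveProb (B \ A) p h * φ (g ∪ h)
      ≤ ∑ h ∈ (B \ A).powerset, liveProb (B \ A) p h * φ g := by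
        apply Finset.sum_le_sum
        intro h hh
        apply mul_le_mul_of_nonneg_left _ (liveProb_nonneg _ hp h)
        -- the submodularity of the gain
        have hhS : ∀ a ∈ h, a.1 ∈ S := fun a ha =>
          (hEC a (hBEC (Finset.mem_sdiff.1 (Finset.mem_powerset.1 hh ha)).1)).1
        rw [hφ]
        simp only
        rw [gain_eq S (g ∪ h) e heS, gain_eq S g e heS]
        exact_mod_cast Set.ncard_le_ncard
          (reach_diff_subset S e.2 g h hhS) (Set.toFinite _)
    _ = φ g := by rw [← Finset.sum_mul, sum_liveProb, one_mul]
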